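/- Let G be a finitely generated group in which every maximal subgroup is normal. Then d(G) = d(G/G'), i.e., the minimal cardinality of a generating set of G equals the minimal cardinality of a generating set of the abelianization G/G'. -/

import Mathlib

open Subgroup

lemma my_isCoatomic {G : Type*} [Group G] [Group.FG G] : IsCoatomic (Subgroup G) := by
  apply IsCoatomic.of_isChain_bounded
  intro c hc hne htop
  refine ⟨sSup c, ?_, fun H hH => le_sSup hH⟩
  intro hs
  obtain ⟨S, hS⟩ := Group.FG.out (G := G)
  have hdir : DirectedOn (· ≤ ·) c := hc.directedOn
  -- every generator lies in some member of the chain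
  have hmem : ∀ x : G, x ∈ sSup c := fun x => hs ▸ mem_top x
  have key : ∀ s : Finset G, ∃ H ∈ c, (s : Set G) ⊆ H := by
    classical
    intro s
    induction s using Finset.induction with
    | empty => obtain ⟨H, hH⟩ := hne; exact ⟨H, hH, by simp⟩
    | @insert a s ha ih =>
      obtain ⟨H, hH, hsub⟩ := ih
      obtain ⟨K, hK, haK⟩ := (Subgroup.mem_sSup_of_directedOn hne hdir).mp (hmem a)
      obtain ⟨L, hL, hHL, hKL⟩ := hdir H hH K hK
      refine ⟨L, hL, ?_⟩
      intro y hy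
      rcases Finset.mem_insert.mp hy with rfl | hy
      · exact hKL haK
      · exact hHL (hsub hy)
  obtain ⟨H, hH, hsub⟩ := key S
  have : H = ⊤ := by
    rw [eq_top_iff, ← hS, Subgroup.closure_le]
    exact hsub
  exact htop (this ▸ hH)

lemma commutator_le_coatom_of_normal {G : Type*} [Group G] {M : Subgroup G}
    (hM : IsCoatom M) [M.Normal] : commutator G ≤ M := by
  rw [commutator_def, Subgroup.commutator_le]
  intro g _ h _
  -- work in the quotient
  set Q := G ⧸ M
  -- every subgroup of Q is ⊥ or ⊤
  have hsub : ∀ H : Subgroup Q, H = ⊥ ∨ H = ⊤ := by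
    intro H
    have hle : M ≤ H.comap (QuotientGroup.mk' M) := by
      intro x hx
      rw [Subgroup.mem_comap]
      have h1 : (QuotientGroup.mk' M) x = 1 := (QuotientGroup.eq_one_iff x).mpr hx
      rw [h1]
      exact H.one_mem
    rcases hle.lt_or_eq with hlt | heq
    · right
      have := hM.2 _ hlt
      have := congrArg (Subgroup.map (QuotientGroup.mk' M)) this
      rwa [Subgroup.map_comap_eq_self_of_surjective (QuotientGroup.mk'_surjective M),
        Subgroup.map_top_of_surjective _ (QuotientGroup.mk'_surjective M)] at this
    · left
      have := congrArg (Subgroup.map (QuotientGroup.mk' M)) heq.symm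
      rw [Subgroup.map_comap_eq_self_of_surjective (QuotientGroup.mk'_surjective M)] at this
      rw [this, eq_bot_iff]
      intro x hx
      obtain ⟨y, hy, rfl⟩ := hx
      simp only [Subgroup.mem_bot, QuotientGroup.mk'_apply]
      exact (QuotientGroup.eq_one_iff y).mpr hy
  -- Q is commutative
  have hcomm : ∀ a b : Q, a * b = b * a := by
    intro a b
    rcases hsub (Subgroup.zpowers a) with h | h
    · have : a = 1 := by
        have := Subgroup.mem_zpowers a
        rw [h] at this
        simpa using this
      simp [this]
    · have hb : b ∈ Subgroup.zpowers a := h ▸ Subgroup.mem_top b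
      obtain ⟨n, rfl⟩ := hb
      show a * a ^ n = a ^ n * a
      exact (Commute.refl a).zpow_right n
  -- conclude
  open scoped commutatorElement in
  have : (QuotientGroup.mk' M) ⁅g, h⁆ = 1 := by
    simp only [map_commutatorElement]
    rw [commutatorElement_def]
    have := hcomm ((QuotientGroup.mk' M) g) ((QuotientGroup.mk' M) h)
    group
    rw [this]
    group
  exact (QuotientGroup.eq_one_iff _).mp this

lemma abelianization_ker : ∀ {G : Type*} [Group G],
    MonoidHom.ker (Abelianization.of (G := G)) = commutator G := by
  intro G _
  ext x
  simp only [MonoidHom.mem_ker]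
  exact QuotientGroup.eq_one_iff x

theorem rank_eq_rank_abelianization
    {G : Type*} [Group G] [Group.FG G]
    (hMN : ∀ M : Subgroup G, IsCoatom M → M.Normal) :
    sInf {n : ℕ | ∃ S : Finset G, S.card = n ∧ Subgroup.closure (S : Set G) = ⊤} =
      sInf {n : ℕ | ∃ S : Finset (Abelianization G),
        S.card = n ∧ Subgroup.closure (S : Set (Abelianization G)) = ⊤} := by
  classical
  have hofsurj : Function.Surjective (Abelianization.of (G := G)) := by
    intro x
    exact Quotient.inductionOn' x fun a => ⟨a, rfl⟩
  set s1 := {n : ℕ | ∃ S : Finset G, S.card = n ∧ Subgroup.closure (S : Set G) = ⊤}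
  set s2 := {n : ℕ | ∃ S : Finset (Abelianization G),
        S.card = n ∧ Subgroup.closure (S : Set (Abelianization G)) = ⊤}
  obtain ⟨S₀, hS₀⟩ := Group.FG.out (G := G)
  have h1ne : s1.Nonempty := ⟨S₀.card, S₀, rfl, hS₀⟩
  -- image of a generating set of G generates the abelianization
  have himg : ∀ S : Finset G, Subgroup.closure (S : Set G) = ⊤ →
      Subgroup.closure ((S.image Abelianization.of : Finset (Abelianization G)) :
        Set (Abelianization G)) = ⊤ := by
    intro S hS
    rw [Finset.coe_image, ← MonoidHom.map_closure, hS]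
    exact Subgroup.map_top_of_surjective _ hofsurj
  have h2ne : s2.Nonempty := ⟨(S₀.image Abelianization.of).card, _, rfl, himg S₀ hS₀⟩
  apply le_antisymm
  · -- sInf s1 ≤ sInf s2 : lift generators
    obtain ⟨T, hTcard, hTgen⟩ := Nat.sInf_mem h2ne
    set f : Abelianization G → G := Function.surjInv hofsurj with hf
    have hfsec : ∀ x, Abelianization.of (f x) = x := Function.surjInv_eq hofsurj
    set S : Finset G := T.image f
    have hSgen : Subgroup.closure (S : Set G) = ⊤ := by
      by_contra hne
      have : IsCoatomic (Subgroup G) := my_isCoatomic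
      rcases (this.eq_top_or_exists_le_coatom (Subgroup.closure (S : Set G))).resolve_left hne
        with ⟨M, hM, hle⟩
      haveI := hMN M hM
      have hcomm : commutator G ≤ M := commutator_le_coatom_of_normal hM
      have hTsub : (T : Set (Abelianization G)) ⊆ (M.map Abelianization.of : Set _) := by
        intro t ht
        refine ⟨f t, ?_, hfsec t⟩
        exact hle (Subgroup.subset_closure (Finset.mem_coe.mpr (Finset.mem_image_of_mem f ht)))
      have htop : M.map Abelianization.of = ⊤ := by
        rw [eq_top_iff, ← hTgen, Subgroup.closure_le]
        exact hTsub
      have : M = ⊤ := by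
        have h1 := congrArg (Subgroup.comap (Abelianization.of (G := G))) htop
        rw [Subgroup.comap_map_eq, abelianization_ker, sup_of_le_left hcomm,
          Subgroup.comap_top] at h1
        exact h1
      exact hM.1 this
    calc sInf s1 ≤ S.card := Nat.sInf_le ⟨S, rfl, hSgen⟩
      _ ≤ T.card := Finset.card_image_le
      _ = sInf s2 := hTcard
  · -- sInf s2 ≤ sInf s1 : push generators forward
    obtain ⟨S, hScard, hSgen⟩ := Nat.sInf_mem h1ne
    calc sInf s2 ≤ (S.image Abelianization.of).card :=
          Nat.sInf_le ⟨S.image Abelianization.of, rfl, himg S hSgen⟩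
      _ ≤ S.card := Finset.card_image_le
      _ = sInf s1 := hScard
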